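/- If F is a finite field with |F| > 2, then the commutator subgroup of GL(2,F) equals SL(2,F). -/

import Mathlib

open Matrix
open scoped commutatorElement

namespace Stmt3Aux

variable {F : Type*} [Field F]

lemma comm_eq {G : Type*} [Group G] {g h k : G} (H : g * h = k * (h * g)) : ⁅g, h⁆ = k := by
  rw [commutatorElement_def, H]
  group

/-- upper elementary matrix as a unit -/
def E12u (c : F) : GL (Fin 2) F :=
  Matrix.GeneralLinearGroup.mkOfDetNeZero !![1, c; 0, 1] (by simp [Matrix.det_fin_two_of])

/-- lower elementary matrix as a unit -/
def E21u (c : F) : GL (Fin 2) F :=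
  Matrix.GeneralLinearGroup.mkOfDetNeZero !![1, 0; c, 1] (by simp [Matrix.det_fin_two_of])

/-- diag(a,1) as a unit -/
def D1u (a : F) (ha : a ≠ 0) : GL (Fin 2) F :=
  Matrix.GeneralLinearGroup.mkOfDetNeZero !![a, 0; 0, 1] (by simp [Matrix.det_fin_two_of, ha])

lemma coe_E12u (c : F) : ((E12u c : GL (Fin 2) F) : Matrix (Fin 2) (Fin 2) F) = !![1, c; 0, 1] := rfl
lemma coe_E21u (c : F) : ((E21u c : GL (Fin 2) F) : Matrix (Fin 2) (Fin 2) F) = !![1, 0; c, 1] := rfl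
lemma coe_D1u (a : F) (ha : a ≠ 0) :
    ((D1u a ha : GL (Fin 2) F) : Matrix (Fin 2) (Fin 2) F) = !![a, 0; 0, 1] := rfl

lemma comm_E12 (a b : F) (ha : a ≠ 0) :
    ⁅D1u a ha, E12u b⁆ = E12u ((a - 1) * b) := by
  apply comm_eq
  apply Units.ext
  simp only [Units.val_mul, coe_D1u, coe_E12u]
  ext i j
  fin_cases i <;> fin_cases j <;>
    simp [Matrix.mul_apply, Fin.sum_univ_two] <;> ring

lemma comm_E21 (a b : F) (ha : a ≠ 0) :
    ⁅D1u a ha, E21u b⁆ = E21u ((a⁻¹ - 1) * b) := by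
  apply comm_eq
  apply Units.ext
  simp only [Units.val_mul, coe_D1u, coe_E21u]
  ext i j
  fin_cases i <;> fin_cases j <;>
    simp [Matrix.mul_apply, Fin.sum_univ_two] <;> field_simp <;> ring

lemma exists_good [Fintype F] (h : 2 < Fintype.card F) : ∃ a : F, a ≠ 0 ∧ a ≠ 1 := by
  classical
  by_contra hc
  push_neg at hc
  have hsub : (Finset.univ : Finset F) ⊆ {0, 1} := by
    intro a _
    simp only [Finset.mem_insert, Finset.mem_singleton]
    by_cases h0 : a = 0
    · exact Or.inl h0
    · exact Or.inr (hc a h0)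
  have h1 : Fintype.card F ≤ ({0, 1} : Finset F).card := by
    rw [← Finset.card_univ]
    exact Finset.card_le_card hsub
  have h2 : ({0, 1} : Finset F).card ≤ 2 :=
    le_trans (Finset.card_insert_le _ _) (by simp)
  omega

lemma E12u_mem [Fintype F] (h : 2 < Fintype.card F) (c : F) : E12u c ∈ commutator (GL (Fin 2) F) := by
  obtain ⟨a, ha0, ha1⟩ := exists_good h
  have hsub : a - 1 ≠ 0 := sub_ne_zero.mpr ha1
  have : ⁅D1u a ha0, E12u (c / (a - 1))⁆ = E12u c := by
    rw [comm_E12]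
    congr 1
    field_simp
  rw [← this, commutator_def]
  exact Subgroup.commutator_mem_commutator (Subgroup.mem_top _) (Subgroup.mem_top _)

lemma E21u_mem [Fintype F] (h : 2 < Fintype.card F) (c : F) : E21u c ∈ commutator (GL (Fin 2) F) := by
  obtain ⟨a, ha0, ha1⟩ := exists_good h
  have hsub : a⁻¹ - 1 ≠ 0 := by
    intro hh
    apply ha1
    have h1 : a⁻¹ = 1 := sub_eq_zero.mp hh
    have := inv_inv a
    rw [h1, inv_one] at this
    exact this.symm
  have : ⁅D1u a ha0, E21u (c / (a⁻¹ - 1))⁆ = E21u c := by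
    rw [comm_E21]
    congr 1
    have h1a : 1 - a ≠ 0 := by
      intro hh; exact ha1 ((sub_eq_zero.mp hh).symm)
    field_simp
  rw [← this, commutator_def]
  exact Subgroup.commutator_mem_commutator (Subgroup.mem_top _) (Subgroup.mem_top _)

lemma mem_of_coe_upper [Fintype F] (h : 2 < Fintype.card F) (g : GL (Fin 2) F) (c : F)
    (hg : (g : Matrix (Fin 2) (Fin 2) F) = !![1, c; 0, 1]) : g ∈ commutator (GL (Fin 2) F) := by
  have : g = E12u c := Units.ext (by rw [hg, coe_E12u])
  rw [this]; exact E12u_mem h c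

lemma mem_of_coe_lower [Fintype F] (h : 2 < Fintype.card F) (g : GL (Fin 2) F) (c : F)
    (hg : (g : Matrix (Fin 2) (Fin 2) F) = !![1, 0; c, 1]) : g ∈ commutator (GL (Fin 2) F) := by
  have : g = E21u c := Units.ext (by rw [hg, coe_E21u])
  rw [this]; exact E21u_mem h c

lemma transvection_cases (t : Matrix.TransvectionStruct (Fin 2) F) :
    t.toMatrix = !![1, t.c; 0, 1] ∨ t.toMatrix = !![1, 0; t.c, 1] := by
  obtain ⟨i, j, hij, c⟩ := t
  fin_cases i <;> fin_cases j
  · exact absurd rfl hij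
  · left
    ext a b
    fin_cases a <;> fin_cases b <;>
      simp [Matrix.TransvectionStruct.toMatrix, Matrix.transvection, Matrix.single,
        Matrix.one_apply]
  · right
    ext a b
    fin_cases a <;> fin_cases b <;>
      simp [Matrix.TransvectionStruct.toMatrix, Matrix.transvection, Matrix.single,
        Matrix.one_apply]
  · exact absurd rfl hij

lemma transvec_mem [Fintype F] (h : 2 < Fintype.card F) (g : GL (Fin 2) F)
    (t : Matrix.TransvectionStruct (Fin 2) F)
    (hg : (g : Matrix (Fin 2) (Fin 2) F) = t.toMatrix) : g ∈ commutator (GL (Fin 2) F) := by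
  rcases transvection_cases t with ht | ht
  · exact mem_of_coe_upper h g t.c (hg.trans ht)
  · exact mem_of_coe_lower h g t.c (hg.trans ht)

lemma diagonal_eq (d : Fin 2 → F) : Matrix.diagonal d = !![d 0, 0; 0, d 1] := by
  ext a b
  fin_cases a <;> fin_cases b <;> simp [Matrix.diagonal]

lemma diag_mem [Fintype F] (g : GL (Fin 2) F) (d : Fin 2 → F)
    (hg : (g : Matrix (Fin 2) (Fin 2) F) = Matrix.diagonal d) (hd : d 0 * d 1 = 1) :
    g ∈ commutator (GL (Fin 2) F) := by
  have hd1 : d 1 ≠ 0 := by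
    intro hh; rw [hh, mul_zero] at hd; exact zero_ne_one hd
  set w : GL (Fin 2) F := Matrix.GeneralLinearGroup.mkOfDetNeZero !![(0 : F), 1; 1, 0]
    (by simp [Matrix.det_fin_two_of]) with hw
  have hcoe_w : (w : Matrix (Fin 2) (Fin 2) F) = !![(0 : F), 1; 1, 0] := rfl
  have key : ⁅w, D1u (d 1) hd1⁆ = g := by
    apply comm_eq
    apply Units.ext
    simp only [Units.val_mul, hcoe_w, coe_D1u, hg, diagonal_eq]
    ext a b
    fin_cases a <;> fin_cases b <;>
      simp [Matrix.mul_apply, Fin.sum_univ_two] <;>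
      first
      | linear_combination hd
      | linear_combination -hd
      | linear_combination (2 : F) * hd
      | linear_combination (-2 : F) * hd
  rw [← key, commutator_def]
  exact Subgroup.commutator_mem_commutator (Subgroup.mem_top _) (Subgroup.mem_top _)

/-- transvection as a unit -/
def tGL (t : Matrix.TransvectionStruct (Fin 2) F) : GL (Fin 2) F :=
  Matrix.GeneralLinearGroup.mkOfDetNeZero t.toMatrix (by rw [t.det]; exact one_ne_zero)

lemma coe_tGL (t : Matrix.TransvectionStruct (Fin 2) F) :
    ((tGL t : GL (Fin 2) F) : Matrix (Fin 2) (Fin 2) F) = t.toMatrix := rfl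

lemma coe_prod (L : List (Matrix.TransvectionStruct (Fin 2) F)) :
    (((L.map tGL).prod : GL (Fin 2) F) : Matrix (Fin 2) (Fin 2) F) =
      (L.map Matrix.TransvectionStruct.toMatrix).prod := by
  induction L with
  | nil => simp
  | cons t L ih => simp [Units.val_mul, ih, coe_tGL]

lemma prod_mem [Fintype F] (h : 2 < Fintype.card F)
    (L : List (Matrix.TransvectionStruct (Fin 2) F)) :
    (L.map tGL).prod ∈ commutator (GL (Fin 2) F) := by
  apply Subgroup.list_prod_mem
  intro x hx
  obtain ⟨t, _, rfl⟩ := List.mem_map.mp hx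
  exact transvec_mem h _ t (coe_tGL t)

end Stmt3Aux

/-- If `F` is a finite field with `|F| > 2`, then the commutator subgroup of `GL(2,F)`
is `SL(2,F)`, i.e. the kernel of the determinant map. -/
theorem stmt3 (F : Type*) [Field F] [Fintype F] (h : 2 < Fintype.card F) :
    commutator (GL (Fin 2) F) = (Matrix.GeneralLinearGroup.det :
      GL (Fin 2) F →* Fˣ).ker := by
  open Stmt3Aux in
  apply le_antisymm
  · rw [commutator_def, Subgroup.commutator_le]
    intro g _ k _
    rw [MonoidHom.mem_ker, map_commutatorElement]
    exact commutatorElement_eq_one_iff_commute.mpr (mul_comm _ _)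
  · intro g hg
    rw [MonoidHom.mem_ker] at hg
    have hdet : (↑g : Matrix (Fin 2) (Fin 2) F).det = 1 := by
      have := congrArg Units.val hg
      simpa [Matrix.GeneralLinearGroup.det] using this
    obtain ⟨L, L', D, hD⟩ :=
      Matrix.Pivot.exists_list_transvec_mul_mul_list_transvec_eq_diagonal
        (↑g : Matrix (Fin 2) (Fin 2) F)
    have hDdet : (Matrix.diagonal D).det = 1 := by
      rw [← hD]
      simp [Matrix.det_mul, Matrix.TransvectionStruct.det_toMatrix_prod, hdet]
    set P : GL (Fin 2) F := (L.map tGL).prod with hP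
    set P' : GL (Fin 2) F := (L'.map tGL).prod with hP'
    set Du : GL (Fin 2) F := Matrix.GeneralLinearGroup.mkOfDetNeZero (Matrix.diagonal D)
      (by rw [hDdet]; exact one_ne_zero) with hDu
    have hprod : P * g * P' = Du := by
      apply Units.ext
      simp only [Units.val_mul, hP, hP', coe_prod]
      exact hD
    have hmemDu : Du ∈ commutator (GL (Fin 2) F) := by
      apply diag_mem Du D rfl
      have := hDdet
      rwa [Matrix.det_diagonal, Fin.prod_univ_two] at this
    have hgP : g = P⁻¹ * Du * P'⁻¹ := by
      rw [← hprod]; group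
    rw [hgP]
    exact mul_mem (mul_mem (inv_mem (prod_mem h L)) hmemDu) (inv_mem (prod_mem h L'))
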